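/- Let G be a graph on X with a rank function ρ defined on all of X (ρ(x) the least ξ with x ∈ Σ_ξ, where Σ_0 = vertices of finite degree and Σ_ξ = vertices x such that for each m every family of disjoint length-m paths from x ending outside ⋃_{ζ<ξ}Σ_ζ is finite). Call a path P from x to y upward if ρ(y) = max{ρ(z) : z ∈ P}. Then for each x ∈ X and m ∈ ω, only finitely many vertices y admit an upward path of length m+1 from x to y. -/

import Mathlib

open Filter Cardinal

/-- `f` is eventually dominated by `g`: `f n ≤ g n` for all but finitely many `n`. -/
def EvDom (f g : ℕ → ℕ) : Prop := ∀ᶠ n in Filter.atTop, f n ≤ g n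

/-- A ray in `G`: an injective one-way infinite path. -/
def IsRay {X : Type} (G : SimpleGraph X) (R : ℕ → X) : Prop :=
  Function.Injective R ∧ ∀ n, G.Adj (R n) (R (n + 1))

/-- A graph is dominating if some labelling makes the labels along rays a dominating family. -/
def DominatingGraph {X : Type} (G : SimpleGraph X) : Prop :=
  ∃ L : X → ℕ, ∀ f : ℕ → ℕ, ∃ R : ℕ → X, IsRay G R ∧ EvDom f (L ∘ R)

/-- `F` is a dominating family of functions. -/
def DomFamily (F : Set (ℕ → ℕ)) : Prop := ∀ g : ℕ → ℕ, ∃ f ∈ F, EvDom g f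

/-- `F` is a bounded family of functions. -/
def BddFamily (F : Set (ℕ → ℕ)) : Prop := ∃ g : ℕ → ℕ, ∀ f ∈ F, EvDom f g

/-- The dominating number 𝔡. -/
noncomputable def dNum : Cardinal := sInf {c | ∃ F : Set (ℕ → ℕ), DomFamily F ∧ #F = c}

/-- The bounding number 𝔟. -/
noncomputable def bNum : Cardinal := sInf {c | ∃ F : Set (ℕ → ℕ), ¬ BddFamily F ∧ #F = c}

/-- A branch vertex: one of countably infinite degree. -/
def BranchVtx {X : Type} (T : SimpleGraph X) (v : X) : Prop := #(T.neighborSet v) = ℵ₀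

/-- `T` is a copy of `T_ω`: a tree all of whose vertices have countably infinite degree. -/
def IsTOmega {X : Type} (T : SimpleGraph X) : Prop :=
  T.IsTree ∧ ∀ v, BranchVtx T v

/-- `T` is a subdivision of `T_ω`: a tree with all degrees 2 or ℵ₀ in which every ray
meets a branch vertex. -/
def IsSubdivTOmega {X : Type} (T : SimpleGraph X) : Prop :=
  T.IsTree ∧ (∀ v, #(T.neighborSet v) = 2 ∨ BranchVtx T v) ∧
    ∀ R : ℕ → X, IsRay T R → ∃ n, BranchVtx T (R n)

/-- `W` is a subdivided edge of `T` (from a branch vertex to a branch vertex, with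
no branch vertices in its interior). -/
def SubdividedEdge {X : Type} (T : SimpleGraph X) {x y : X} (W : T.Walk x y) : Prop :=
  W.IsPath ∧ BranchVtx T x ∧ BranchVtx T y ∧ 0 < W.length ∧
    ∀ v ∈ W.support, v ≠ x → v ≠ y → ¬ BranchVtx T v

/-- `T` is a uniform subdivision of `T_ω`: it has a root `r` such that at every branch
vertex `x`, all subdivided edges at `x` not towards `r` have the same length. -/
def UniformSubdivTOmega {X : Type} (T : SimpleGraph X) : Prop :=
  IsSubdivTOmega T ∧ ∃ r : X, BranchVtx T r ∧
    ∀ (x y z : X) (W : T.Walk x y) (W' : T.Walk x z),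
      SubdividedEdge T W → SubdividedEdge T W' →
      (∀ P : T.Walk x r, P.IsPath → y ∉ P.support) →
      (∀ P : T.Walk x r, P.IsPath → z ∉ P.support) →
      W.length = W'.length

/-- `Ps` is a family of disjoint paths starting at `x`: each member is a path from `x`,
and distinct members share no vertex other than `x`. -/
def DisjPathFam {X : Type} (G : SimpleGraph X) (x : X)
    (Ps : Set (Σ y : X, G.Walk x y)) : Prop :=
  (∀ P ∈ Ps, Sigma.snd P |>.IsPath) ∧
    ∀ P ∈ Ps, ∀ Q ∈ Ps, P ≠ Q →
      ∀ v, v ∈ (Sigma.snd P).support → v ∈ (Sigma.snd Q).support → v = x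
open SimpleGraph in
theorem key {X : Type} (G : SimpleGraph X) (S : Ordinal → Set X)
    (h0 : S 0 = {x : X | (G.neighborSet x).Finite})
    (hS : ∀ ξ : Ordinal, 0 < ξ → S ξ = {x : X | ∀ m : ℕ,
      ∀ Ps : Set (Σ y : X, G.Walk x y), DisjPathFam G x Ps →
        (∀ P ∈ Ps, (Sigma.snd P).length = m) →
        (∀ P ∈ Ps, Sigma.fst P ∉ ⋃ ζ ∈ Set.Iio ξ, S ζ) → Ps.Finite})
    (ρ : X → Ordinal)
    (hρ : ∀ x : X, x ∈ S (ρ x) ∧ ∀ ξ : Ordinal, ξ < ρ x → x ∉ S ξ) :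
    ∀ (n : ℕ) (v : X),
      {y : X | ∃ W : G.Walk v y, W.IsPath ∧ W.length = n ∧
        ∀ z ∈ W.support, ρ z ≤ ρ y}.Finite := by
  classical
  intro n
  induction n using Nat.strong_induction_on with
  | _ n IH =>
  match n with
  | 0 =>
    intro v
    apply Set.Finite.subset (Set.finite_singleton v)
    rintro y ⟨W, -, hlen, -⟩
    exact (Walk.eq_of_length_eq_zero hlen).symm
  | (k+1) =>
    intro v
    by_contra hfin
    have hA : {y : X | ∃ W : G.Walk v y, W.IsPath ∧ W.length = k + 1 ∧
        ∀ z ∈ W.support, ρ z ≤ ρ y}.Infinite := hfin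
    set A := {y : X | ∃ W : G.Walk v y, W.IsPath ∧ W.length = k + 1 ∧
        ∀ z ∈ W.support, ρ z ≤ ρ y} with hAdef
    have hvA : v ∉ A := by
      rintro ⟨W, hp, hlen, -⟩
      have := Walk.isPath_iff_eq_nil.mp hp
      rw [this] at hlen
      simp at hlen
    have hWex : ∀ y : A, ∃ W : G.Walk v (y : X), W.IsPath ∧ W.length = k + 1 ∧
        ∀ z ∈ W.support, ρ z ≤ ρ (y : X) := fun y => y.2
    choose W hWp hWlen hWup using hWex
    -- each vertex other than v lies on only finitely many of the chosen paths
    have hfin_through : ∀ w : X, w ≠ v → {y : A | w ∈ (W y).support}.Finite := by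
      intro w hw
      have hBig : {y : X | ∃ W' : G.Walk w y, W'.IsPath ∧ W'.length ≤ k ∧
          ∀ z ∈ W'.support, ρ z ≤ ρ y}.Finite := by
        refine Set.Finite.subset (Set.Finite.biUnion (Set.finite_Iic k)
          (fun j hj => IH j (Nat.lt_succ_of_le hj) w)) ?_
        rintro y ⟨W', h1, h2, h3⟩
        exact Set.mem_biUnion (Set.mem_Iic.mpr h2) ⟨W', h1, rfl, h3⟩
      apply Set.Finite.of_finite_image _ (Set.injOn_of_injective Subtype.val_injective)
      refine hBig.subset ?_
      rintro _ ⟨y, hy, rfl⟩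
      have hw' : w ∈ (W y).support := hy
      refine ⟨(W y).dropUntil w hw', (hWp y).dropUntil hw', ?_,
        fun z hz => hWup y z (Walk.support_dropUntil_subset _ hw' hz)⟩
      have hsum : ((W y).takeUntil w hw').length + ((W y).dropUntil w hw').length = k + 1 := by
        have := congrArg Walk.length ((W y).take_spec hw')
        rwa [Walk.length_append, hWlen y] at this
      have hpos : 0 < ((W y).takeUntil w hw').length := by
        rcases Nat.eq_zero_or_pos ((W y).takeUntil w hw').length with h | h
        · exact absurd (Walk.eq_of_length_eq_zero h).symm hw
        · exact h
      omega
    haveI : Infinite ↥A := hA.to_subtype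
    -- sets of "bad" endpoints relative to a finite list of already chosen endpoints
    have hbad : ∀ l : List ↥A, {y : ↥A | ∃ y' ∈ l, ∃ w, w ≠ v ∧ w ∈ (W y').support ∧
        w ∈ (W y).support}.Finite := by
      intro l
      refine Set.Finite.subset (Set.Finite.biUnion l.finite_toSet
        (fun y' _ => Set.Finite.biUnion (((W y').support.finite_toSet).diff (t := {v}))
          (fun w hw => hfin_through w (by simpa using hw.2)))) ?_
      rintro y ⟨y', hy', w, hwv, hw1, hw2⟩
      exact Set.mem_biUnion hy' (Set.mem_biUnion ⟨hw1, by simpa using hwv⟩ hw2)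
    have hnextex : ∀ l : List ↥A, ∃ y : ↥A, ¬ (∃ y' ∈ l, ∃ w, w ≠ v ∧ w ∈ (W y').support ∧
        w ∈ (W y).support) := by
      intro l
      obtain ⟨y, hy⟩ := ((hbad l).infinite_compl).nonempty
      exact ⟨y, hy⟩
    choose next hnext using hnextex
    let chain : ℕ → List ↥A := fun j => Nat.rec [] (fun _ l => next l :: l) j
    let f : ℕ → ↥A := fun j => next (chain j)
    have hmem : ∀ i j, i < j → f i ∈ chain j := by
      intro i j hij
      induction j with
      | zero => omega
      | succ j ihj =>
        show f i ∈ f j :: chain j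
        rcases Nat.lt_succ_iff_lt_or_eq.mp hij with h | h
        · exact List.mem_cons_of_mem _ (ihj h)
        · subst h; exact List.mem_cons_self
    have hdisj : ∀ i j, i < j → ∀ w, w ∈ (W (f i)).support → w ∈ (W (f j)).support → w = v := by
      intro i j hij w hw1 hw2
      by_contra hwv
      exact hnext (chain j) ⟨f i, hmem i j hij, w, hwv, hw1, hw2⟩
    have hfinj : Function.Injective f := by
      intro i j hij
      by_contra hne
      have key : ∀ i j : ℕ, i < j → f i = f j → False := by
        intro i j h hf
        have h1 : ((f i : X)) ∈ (W (f i)).support := Walk.end_mem_support _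
        have h2 : ((f i : X)) ∈ (W (f j)).support := by rw [← hf]; exact h1
        have := hdisj i j h _ h1 h2
        exact hvA (this ▸ (f i).2)
      rcases lt_trichotomy i j with h | h | h
      · exact key i j h hij
      · exact hne h
      · exact key j i h hij.symm
    set F : ℕ → (Σ y : X, G.Walk v y) := fun j => ⟨(f j : X), W (f j)⟩ with hF
    have hFinj : Function.Injective F := by
      intro i j h
      have : (f i : X) = (f j : X) := congrArg Sigma.fst h
      exact hfinj (Subtype.val_injective this)
    have hPsInf : (Set.range F).Infinite := Set.infinite_range_of_injective hFinj
    have hDisj : DisjPathFam G v (Set.range F) := by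
      constructor
      · rintro P ⟨j, rfl⟩; exact hWp (f j)
      · rintro P ⟨i, rfl⟩ Q ⟨j, rfl⟩ hne w hw1 hw2
        have hij : i ≠ j := fun h => hne (by rw [h])
        rcases lt_or_gt_of_ne hij with h | h
        · exact hdisj i j h w hw1 hw2
        · exact hdisj j i h w hw2 hw1
    have hLen : ∀ P ∈ Set.range F, (Sigma.snd P).length = k + 1 := by
      rintro P ⟨j, rfl⟩; exact hWlen (f j)
    have hOut : ∀ P ∈ Set.range F, Sigma.fst P ∉ ⋃ ζ ∈ Set.Iio (ρ v), S ζ := by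
      rintro P ⟨j, rfl⟩ hmem'
      simp only [Set.mem_iUnion, Set.mem_Iio] at hmem'
      obtain ⟨ζ, hζ, hmemS⟩ := hmem'
      have hle : ρ v ≤ ρ (f j : X) := hWup (f j) v (Walk.start_mem_support _)
      exact (hρ (f j : X)).2 ζ (lt_of_lt_of_le hζ hle) hmemS
    by_cases hz : ρ v = 0
    · -- rank zero: v has finite degree, but the disjoint paths give infinitely many neighbours
      have hv0 : v ∈ S 0 := hz ▸ (hρ v).1
      rw [h0] at hv0
      have hadj : ∀ j : ℕ, G.Adj v ((W (f j)).getVert 1) := by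
        intro j
        have h1 : 0 < (W (f j)).length := by rw [hWlen]; omega
        have := Walk.adj_getVert_succ (W (f j)) h1
        rwa [Walk.getVert_zero] at this
      have hmemsup : ∀ j : ℕ, (W (f j)).getVert 1 ∈ (W (f j)).support := by
        intro j
        rw [Walk.mem_support_iff_exists_getVert]
        exact ⟨1, rfl, by rw [hWlen]; omega⟩
      have hinj : Function.Injective (fun j : ℕ => (W (f j)).getVert 1) := by
        intro i j h
        by_contra hne
        have key : ∀ i j : ℕ, i < j →
            (W (f i)).getVert 1 = (W (f j)).getVert 1 → False := by
          intro i j hlt heq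
          have h2 : (W (f i)).getVert 1 ∈ (W (f j)).support := heq ▸ hmemsup j
          have := hdisj i j hlt _ (hmemsup i) h2
          exact (hadj i).ne' this
        rcases lt_trichotomy i j with h' | h' | h'
        · exact key i j h' h
        · exact hne h'
        · exact key j i h' h.symm
      exact Set.infinite_of_injective_forall_mem hinj
        (fun j => (hadj j : _)) hv0
    · have hpos : 0 < ρ v := pos_iff_ne_zero.mpr hz
      have hv : v ∈ S (ρ v) := (hρ v).1
      rw [hS (ρ v) hpos] at hv
      exact hPsInf (hv (k + 1) (Set.range F) hDisj hLen hOut)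

/-- If the rank `ρ` is defined everywhere, then for each vertex `x` and each `m`, only
finitely many vertices `y` admit an upward path of length `m+1` from `x` to `y`. -/
theorem stmt12 {X : Type} (G : SimpleGraph X) (S : Ordinal → Set X)
    (h0 : S 0 = {x : X | (G.neighborSet x).Finite})
    (hS : ∀ ξ : Ordinal, 0 < ξ → S ξ = {x : X | ∀ m : ℕ,
      ∀ Ps : Set (Σ y : X, G.Walk x y), DisjPathFam G x Ps →
        (∀ P ∈ Ps, (Sigma.snd P).length = m) →
        (∀ P ∈ Ps, Sigma.fst P ∉ ⋃ ζ ∈ Set.Iio ξ, S ζ) → Ps.Finite})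
    (ρ : X → Ordinal)
    (hρ : ∀ x : X, x ∈ S (ρ x) ∧ ∀ ξ : Ordinal, ξ < ρ x → x ∉ S ξ) :
    ∀ (x : X) (m : ℕ),
      {y : X | ∃ W : G.Walk x y, W.IsPath ∧ W.length = m + 1 ∧
        ∀ z ∈ W.support, ρ z ≤ ρ y}.Finite := by
  intro x m
  exact key G S h0 hS ρ hρ (m + 1) x
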